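/- Minimum spanning tree routing is an n-approximation: Let G = (V,E,ℓ) be a connected graph with positive edge lengths, n = |V|, d the induced shortest-path metric, and T a minimum-total-length spanning tree of G with induced tree metric d_T. Then d_T(x,y) ≤ n·d(x,y) for all x,y ∈ V; consequently the unique flow routing demands b along T has cost at most n·‖b‖_opt(d). -/

import Mathlib

open SimpleGraph

private lemma reachable_lift {V : Type*} {H K : SimpleGraph V}
    (h : ∀ a b : V, H.Adj a b → K.Reachable a b) {v w : V} (hr : H.Reachable v w) :
    K.Reachable v w := by
  obtain ⟨p⟩ := hr
  induction p with
  | nil => exact Reachable.refl _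
  | cons ha q ih => exact (h _ _ ha).trans ih

private lemma split_at_edge {V : Type*} {H : SimpleGraph V} {x u a b : V}
    (p : H.Walk x u) (hp : p.IsPath) (hf : s(a, b) ∈ p.edges) :
    ((H.deleteEdges {s(a, b)}).Reachable x a ∧ (H.deleteEdges {s(a, b)}).Reachable b u) ∨
    ((H.deleteEdges {s(a, b)}).Reachable x b ∧ (H.deleteEdges {s(a, b)}).Reachable a u) := by
  induction p with
  | nil => simp at hf
  | @cons v c u' h q ih =>
    have hnodup : s(v, c) ∉ q.edges := by
      have := hp.edges_nodup
      rw [Walk.edges_cons, List.nodup_cons] at this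
      exact this.1
    rw [Walk.edges_cons, List.mem_cons] at hf
    rcases hf with heq | hmem
    · rcases Sym2.eq_iff.mp heq with ⟨rfl, rfl⟩ | ⟨rfl, rfl⟩
      · refine Or.inl ⟨Reachable.refl _, ⟨q.toDeleteEdges _ ?_⟩⟩
        intro e he
        simp only [Set.mem_singleton_iff]
        rintro rfl
        exact hnodup he
      · refine Or.inr ⟨Reachable.refl _, ⟨q.toDeleteEdges _ ?_⟩⟩
        intro e he
        simp only [Set.mem_singleton_iff]
        rintro rfl
        exact hnodup (by rwa [Sym2.eq_swap])
    · have hstep : (H.deleteEdges {s(a, b)}).Adj v c := by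
        rw [deleteEdges_adj]
        refine ⟨h, ?_⟩
        simp only [Set.mem_singleton_iff]
        intro hcontra
        exact hnodup (by rw [hcontra]; exact hmem)
      rcases ih hp.of_cons hmem with ⟨h1, h2⟩ | ⟨h1, h2⟩
      · exact Or.inl ⟨hstep.reachable.trans h1, h2⟩
      · exact Or.inr ⟨hstep.reachable.trans h1, h2⟩

/-- Minimum spanning tree routing is an `n`-approximation: for a minimum-total-length
spanning tree `T` of a connected length-graph `G`, the tree metric satisfies
`d_T ≤ n·d`, and consequently routing any zero-sum demand along `T` (whose cost is
the min-cost under `d_T`) costs at most `n` times the min-cost under `d`. -/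
theorem stmt8 {V : Type*} [Fintype V] [DecidableEq V]
    (G : SimpleGraph V) (hGconn : G.Connected)
    (ℓ : Sym2 V → ℝ) (hℓ : ∀ e ∈ G.edgeSet, 0 < ℓ e)
    (T : SimpleGraph V) (hTG : T ≤ G) (hT : T.IsTree)
    (hmin : ∀ T' : SimpleGraph V, T' ≤ G → T'.IsTree →
      ∑ e ∈ (Set.toFinite T.edgeSet).toFinset, ℓ e ≤
      ∑ e ∈ (Set.toFinite T'.edgeSet).toFinset, ℓ e)
    (d dT : V → V → ℝ)
    (hd : ∀ x y, IsGLB {r | ∃ p : G.Walk x y, r = (p.edges.map ℓ).sum} (d x y))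
    (hdT : ∀ x y, IsGLB {r | ∃ p : T.Walk x y, r = (p.edges.map ℓ).sum} (dT x y))
    (n : ℕ) (hn : n = Fintype.card V) :
    (∀ x y, dT x y ≤ n * d x y) ∧
    (∀ b : V → ℝ, (∑ v, b v = 0) →
      sSup {s | ∃ φ : V → ℝ, (∀ x y, |φ x - φ y| ≤ dT x y) ∧ s = ∑ v, φ v * b v} ≤
      n * sSup {s | ∃ φ : V → ℝ, (∀ x y, |φ x - φ y| ≤ d x y) ∧ s = ∑ v, φ v * b v}) := by
  have hnV : Nonempty V := hGconn.nonempty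
  have hn1 : 1 ≤ n := by rw [hn]; exact Fintype.card_pos
  have hnR : (0 : ℝ) < n := by exact_mod_cast Nat.lt_of_lt_of_le Nat.zero_lt_one hn1
  -- basic facts about dT
  have hdT_mem : ∀ {x y : V} (p : T.Walk x y), dT x y ≤ (p.edges.map ℓ).sum :=
    fun {x y} p => (hdT x y).1 ⟨p, rfl⟩
  have hdT_nonneg : ∀ x y, 0 ≤ dT x y := by
    intro x y
    refine (hdT x y).2 ?_
    rintro r ⟨p, rfl⟩
    refine List.sum_nonneg ?_
    intro r hr
    rw [List.mem_map] at hr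
    obtain ⟨e, he, rfl⟩ := hr
    exact le_of_lt (hℓ e (edgeSet_mono hTG (p.edges_subset_edgeSet he)))
  have hdT_refl : ∀ x, dT x x ≤ 0 := by
    intro x
    simpa using hdT_mem (Walk.nil : T.Walk x x)
  have htri : ∀ x y z, dT x z ≤ dT x y + dT y z := by
    intro x y z
    have h1 : ∀ p : T.Walk x y, dT x z - (p.edges.map ℓ).sum ≤ dT y z := by
      intro p
      refine (hdT y z).2 ?_
      rintro r ⟨q, rfl⟩
      have := hdT_mem (p.append q)
      rw [Walk.edges_append, List.map_append, List.sum_append] at this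
      linarith
    have h2 : dT x z - dT y z ≤ dT x y := by
      refine (hdT x y).2 ?_
      rintro r ⟨p, rfl⟩
      have := h1 p
      linarith
    linarith
  -- the key edge bound via the exchange argument
  have key : ∀ x u : V, G.Adj x u → dT x u ≤ n * ℓ s(x, u) := by
    intro x u hxu
    have hlpos : 0 < ℓ s(x, u) := hℓ _ hxu
    by_cases heT : s(x, u) ∈ T.edgeSet
    · have h1 : dT x u ≤ ℓ s(x, u) := by
        simpa using hdT_mem (x := x) (y := u) (Walk.cons ((mem_edgeSet T).mp heT) Walk.nil)
      have : (1 : ℝ) ≤ n := by exact_mod_cast hn1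
      nlinarith
    · obtain ⟨w⟩ := hT.isConnected.preconnected x u
      set p : T.Path x u := w.toPath with hp
      have hedge : ∀ f ∈ (p : T.Walk x u).edges, ℓ f ≤ ℓ s(x, u) := by
        intro f hfmem
        induction f using Sym2.ind with
        | _ a b =>
        have hfT : T.Adj a b := (p : T.Walk x u).edges_subset_edgeSet hfmem
        have hsplit := split_at_edge (p : T.Walk x u) p.2 hfmem
        set T' : SimpleGraph V := T.deleteEdges {s(a, b)} ⊔ fromEdgeSet {s(x, u)} with hT'
        have hdelT' : T.deleteEdges {s(a, b)} ≤ T' := le_sup_left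
        have hT'G : T' ≤ G := by
          refine sup_le ((deleteEdges_le _).trans hTG) ?_
          intro v' w' hvw'
          rw [fromEdgeSet_adj, Set.mem_singleton_iff] at hvw'
          rcases Sym2.eq_iff.mp hvw'.1 with ⟨rfl, rfl⟩ | ⟨rfl, rfl⟩
          · exact hxu
          · exact hxu.symm
        have hxu' : T'.Adj x u := by
          rw [hT', sup_adj, fromEdgeSet_adj]
          exact Or.inr ⟨rfl, hxu.ne⟩
        have hreach_ab : T'.Reachable a b := by
          rcases hsplit with ⟨h1, h2⟩ | ⟨h1, h2⟩
          · exact ((h1.mono hdelT').symm.trans hxu'.reachable).trans (h2.mono hdelT').symm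
          · exact (((h1.mono hdelT').symm.trans hxu'.reachable).trans (h2.mono hdelT').symm).symm
        have hT'conn : T'.Connected := by
          rw [connected_iff]
          refine ⟨fun v' w' => ?_, ⟨x⟩⟩
          refine reachable_lift ?_ (hT.isConnected.preconnected v' w')
          intro c e hce
          by_cases hcef : s(c, e) = s(a, b)
          · rcases Sym2.eq_iff.mp hcef with ⟨rfl, rfl⟩ | ⟨rfl, rfl⟩
            · exact hreach_ab
            · exact hreach_ab.symm
          · refine Adj.reachable (?_ : T'.Adj c e)
            rw [hT', sup_adj]
            exact Or.inl (deleteEdges_adj.mpr ⟨hce, by simpa using hcef⟩)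
        have hnotreach : ¬ (T.deleteEdges {s(a, b)}).Reachable x u := by
          intro hr
          have hbridge : T.IsBridge s(a, b) :=
            (isAcyclic_iff_forall_adj_isBridge.mp hT.IsAcyclic) hfT
          have : (T \ fromEdgeSet {s(a, b)}).Reachable a b := by
            rcases hsplit with ⟨h1, h2⟩ | ⟨h1, h2⟩
            · exact (h1.symm.trans hr).trans h2.symm
            · exact ((h1.symm.trans hr).trans h2.symm).symm
          exact isBridge_iff.mp hbridge this
        have hT'acyc : T'.IsAcyclic := by
          intro v' c hc
          by_cases hec : s(x, u) ∈ c.edges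
          · have hcyc := adj_and_reachable_delete_edges_iff_exists_cycle.mpr ⟨v', c, hc, hec⟩
            refine hnotreach (hcyc.2.mono ?_)
            intro c' e' hce'
            rw [deleteEdges_adj] at hce'
            obtain ⟨h1, h2⟩ := hce'
            rw [hT', sup_adj] at h1
            rcases h1 with h1 | h1
            · exact h1
            · exact absurd ((fromEdgeSet_adj _).mp h1).1 h2
          · have hsub : ∀ e ∈ c.edges, e ∈ T.edgeSet := by
              intro e he
              have hmem := c.edges_subset_edgeSet he
              rw [edgeSet_sup] at hmem
              rcases hmem with hmem | hmem
              · exact edgeSet_mono (deleteEdges_le _) hmem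
              · rw [edgeSet_fromEdgeSet] at hmem
                rcases hmem.1 with rfl
                exact absurd he hec
            exact hT.IsAcyclic (c.transfer T hsub) (hc.transfer hsub)
        have hT'tree : T'.IsTree := ⟨hT'conn, hT'acyc⟩
        have hmin' := hmin T' hT'G hT'tree
        -- compute the edge sets
        have hdel_edge : (T.deleteEdges {s(a, b)}).edgeSet = T.edgeSet \ {s(a, b)} := by
          show (T \ fromEdgeSet {s(a, b)}).edgeSet = _
          rw [edgeSet_sdiff, edgeSet_fromEdgeSet, edgeSet_sdiff_sdiff_isDiag]
        have hfeq : (Set.toFinite T'.edgeSet).toFinset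
            = insert s(x, u) (((Set.toFinite T.edgeSet).toFinset).erase s(a, b)) := by
          ext e
          simp only [Set.Finite.mem_toFinset, Finset.mem_insert, Finset.mem_erase,
            Set.Finite.mem_toFinset]
          rw [hT', edgeSet_sup, edgeSet_fromEdgeSet, hdel_edge]
          constructor
          · rintro (⟨h1, h2⟩ | ⟨h1, h2⟩)
            · exact Or.inr ⟨by simpa using h2, h1⟩
            · exact Or.inl (by simpa using h1)
          · rintro (rfl | ⟨hne, hmem⟩)
            · exact Or.inr ⟨rfl, by simp [Sym2.mk_isDiag_iff, hxu.ne]⟩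
            · exact Or.inl ⟨hmem, by simpa using hne⟩
        rw [hfeq] at hmin'
        have hxnotin : s(x, u) ∉ ((Set.toFinite T.edgeSet).toFinset).erase s(a, b) := by
          intro hmem
          exact heT (by simpa using (Finset.mem_erase.mp hmem).2)
        rw [Finset.sum_insert hxnotin] at hmin'
        have habin : s(a, b) ∈ (Set.toFinite T.edgeSet).toFinset := by
          simpa using hfT
        have := Finset.sum_erase_add (Set.toFinite T.edgeSet).toFinset ℓ habin
        linarith
      -- now sum over the path
      have hsum : ((p : T.Walk x u).edges.map ℓ).sum
          ≤ ((p : T.Walk x u).edges.length : ℝ) * ℓ s(x, u) := by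
        have := List.sum_le_card_nsmul ((p : T.Walk x u).edges.map ℓ) (ℓ s(x, u)) ?_
        · simpa [nsmul_eq_mul] using this
        · intro r hr
          rw [List.mem_map] at hr
          obtain ⟨e, he, rfl⟩ := hr
          exact hedge e he
      have hlen : ((p : T.Walk x u).edges.length : ℝ) ≤ (n : ℝ) := by
        have h1 : (p : T.Walk x u).length < Fintype.card V := p.2.length_lt
        rw [Walk.length_edges]
        exact_mod_cast le_of_lt (hn ▸ h1)
      calc dT x u ≤ ((p : T.Walk x u).edges.map ℓ).sum := hdT_mem _
        _ ≤ ((p : T.Walk x u).edges.length : ℝ) * ℓ s(x, u) := hsum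
        _ ≤ n * ℓ s(x, u) := by
            exact mul_le_mul_of_nonneg_right hlen (le_of_lt hlpos)
  -- part 1
  have part1 : ∀ x y, dT x y ≤ n * d x y := by
    intro x y
    have hwalks : ∀ (z : V) (p : G.Walk z y), dT z y ≤ n * (p.edges.map ℓ).sum := by
      intro z p
      induction p with
      | nil => simpa using hdT_refl _
      | @cons v c y' hadj q ih =>
        have h1 := key v c hadj
        have h2 := htri v c y'
        rw [Walk.edges_cons, List.map_cons, List.sum_cons, mul_add]
        linarith
    have hlb : dT x y / n ≤ d x y := by
      refine (hd x y).2 ?_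
      rintro r ⟨p, rfl⟩
      rw [div_le_iff₀ hnR]
      rw [mul_comm]
      exact hwalks x p
    rw [div_le_iff₀ hnR] at hlb
    linarith
  refine ⟨part1, ?_⟩
  -- part 2
  intro b hb
  set Sd := {s | ∃ φ : V → ℝ, (∀ x y, |φ x - φ y| ≤ d x y) ∧ s = ∑ v, φ v * b v} with hSd
  set ST := {s | ∃ φ : V → ℝ, (∀ x y, |φ x - φ y| ≤ dT x y) ∧ s = ∑ v, φ v * b v} with hST
  have hd_nonneg : ∀ x y, 0 ≤ d x y := by
    intro x y
    refine (hd x y).2 ?_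
    rintro r ⟨p, rfl⟩
    refine List.sum_nonneg ?_
    intro r hr
    rw [List.mem_map] at hr
    obtain ⟨e, he, rfl⟩ := hr
    exact le_of_lt (hℓ e (p.edges_subset_edgeSet he))
  have hSTne : ST.Nonempty := ⟨0, 0, fun x y => by simpa using hdT_nonneg x y, by simp⟩
  obtain ⟨v0⟩ := hnV
  have hbdd : BddAbove Sd := by
    refine ⟨∑ v, d v v0 * |b v|, ?_⟩
    rintro s ⟨φ, hφ, rfl⟩
    have heq : ∑ v, φ v * b v = ∑ v, (φ v - φ v0) * b v := by
      have : ∑ v, (φ v - φ v0) * b v = ∑ v, φ v * b v - φ v0 * ∑ v, b v := by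
        rw [Finset.mul_sum, ← Finset.sum_sub_distrib]
        congr 1; ext v; ring
      rw [this, hb, mul_zero, sub_zero]
    rw [heq]
    refine Finset.sum_le_sum ?_
    intro v _
    calc (φ v - φ v0) * b v ≤ |(φ v - φ v0) * b v| := le_abs_self _
      _ = |φ v - φ v0| * |b v| := abs_mul _ _
      _ ≤ d v v0 * |b v| := mul_le_mul_of_nonneg_right (hφ v v0) (abs_nonneg _)
  refine csSup_le hSTne ?_
  rintro s ⟨φ, hφ, rfl⟩
  set ψ : V → ℝ := fun v => φ v / n with hψ
  have hψd : ∀ x y, |ψ x - ψ y| ≤ d x y := by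
    intro x y
    have h1 : |ψ x - ψ y| = |φ x - φ y| / n := by
      rw [hψ]
      rw [div_sub_div_same, abs_div, abs_of_pos hnR]
    rw [h1, div_le_iff₀ hnR]
    calc |φ x - φ y| ≤ dT x y := hφ x y
      _ ≤ n * d x y := part1 x y
      _ = d x y * n := mul_comm _ _
  have hmem : (∑ v, ψ v * b v) ∈ Sd := ⟨ψ, hψd, rfl⟩
  have hle : (∑ v, ψ v * b v) ≤ sSup Sd := le_csSup hbdd hmem
  have heq2 : ∑ v, φ v * b v = n * ∑ v, ψ v * b v := by
    rw [Finset.mul_sum]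
    congr 1; ext v
    rw [hψ]
    field_simp
  rw [heq2]
  exact mul_le_mul_of_nonneg_left hle (le_of_lt hnR)
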